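/- Let K ⊆ ℝᵈ be a closed convex cone and g ∈ ℝᵈ. Then min over {v ∈ K, ‖v‖₂ ≤ 1} of ⟪g, v⟫ equals −dist(g, K*), where K* is the dual cone and dist is Euclidean distance. Equivalently, the optimal value of the linear minimization over the unit-ball-intersected cone equals minus the distance of g to the dual cone. -/

import Mathlib

open RealInnerProductSpace

theorem stmt15 {d : ℕ} (K : Set (EuclideanSpace ℝ (Fin d)))
    (hclosed : IsClosed K) (hconv : Convex ℝ K)
    (hcone : ∀ (c : ℝ), 0 ≤ c → ∀ x ∈ K, c • x ∈ K)
    (h0 : (0 : EuclideanSpace ℝ (Fin d)) ∈ K)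
    (g : EuclideanSpace ℝ (Fin d)) :
    sInf ((fun v => ⟪g, v⟫) '' {v | v ∈ K ∧ ‖v‖ ≤ 1})
      = - Metric.infDist g {u | ∀ x ∈ K, 0 ≤ ⟪u, x⟫} := by
  obtain ⟨p, hpK, hproj⟩ := exists_norm_eq_iInf_of_complete_convex
    ⟨0, h0⟩ hclosed.isComplete hconv (-g)
  have hvar : ∀ w ∈ K, ⟪-g - p, w - p⟫ ≤ 0 :=
    (norm_eq_iInf_iff_real_inner_le_zero hconv hpK).mp hproj
  -- key facts about u = g + p
  have h1 := hvar 0 h0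
  have h2 := hvar ((2:ℝ) • p) (hcone 2 (by norm_num) p hpK)
  rw [show (0 : EuclideanSpace ℝ (Fin d)) - p = -p from zero_sub p] at h1
  rw [show ((2:ℝ) • p : EuclideanSpace ℝ (Fin d)) - p = p by module] at h2
  have hgp : ⟪g, p⟫ = -‖p‖^2 := by
    have e1 : ⟪-g - p, -p⟫ = ⟪g, p⟫ + ⟪p, p⟫ := by
      rw [inner_sub_left, inner_neg_neg, inner_neg_right]; ring
    have e2 : ⟪-g - p, p⟫ = -⟪g, p⟫ - ⟪p, p⟫ := by
      rw [inner_sub_left, inner_neg_left]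
    rw [e1] at h1; rw [e2] at h2
    have : ⟪p, p⟫ = ‖p‖^2 := real_inner_self_eq_norm_sq p
    linarith
  have hudual : (g + p) ∈ {u : EuclideanSpace ℝ (Fin d) | ∀ x ∈ K, 0 ≤ ⟪u, x⟫} := by
    intro x hx
    have h3 := hvar x hx
    have e3 : ⟪-g - p, x - p⟫ = -⟪g + p, x⟫ + ⟪g, p⟫ + ⟪p, p⟫ := by
      rw [inner_sub_left, inner_sub_right, inner_sub_right, inner_neg_left,
        inner_neg_left, inner_add_left]; ring
    have : ⟪p, p⟫ = ‖p‖^2 := real_inner_self_eq_norm_sq p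
    rw [e3, this, hgp] at h3
    linarith
  -- distance equals ‖p‖
  have hdist : Metric.infDist g {u : EuclideanSpace ℝ (Fin d) | ∀ x ∈ K, 0 ≤ ⟪u, x⟫} = ‖p‖ := by
    apply le_antisymm
    · have := Metric.infDist_le_dist_of_mem (x := g) hudual
      rwa [dist_eq_norm, show g - (g + p) = -p by abel, norm_neg] at this
    · have hne : Set.Nonempty {u : EuclideanSpace ℝ (Fin d) | ∀ x ∈ K, 0 ≤ ⟪u, x⟫} :=
        ⟨g + p, hudual⟩
      haveI := hne.to_subtype
      rw [Metric.infDist_eq_iInf]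
      apply le_ciInf
      rintro ⟨u', hu'⟩
      simp only [dist_eq_norm]
      rcases eq_or_ne p 0 with hp0 | hp0
      · simp [hp0]
      · have hpn : 0 < ‖p‖ := norm_pos_iff.mpr hp0
        have hcs : ⟪u' - g, p⟫ ≤ ‖u' - g‖ * ‖p‖ := real_inner_le_norm _ _
        have heq : ⟪u' - g, p⟫ = ⟪u', p⟫ - ⟪g, p⟫ := inner_sub_left _ _ _
        have hup' : 0 ≤ ⟪u', p⟫ := hu' p hpK
        have h4 : ‖p‖^2 ≤ ‖u' - g‖ * ‖p‖ := by
          rw [heq, hgp] at hcs; linarith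
        have hn : ‖u' - g‖ = ‖g - u'‖ := norm_sub_rev _ _
        nlinarith
  rw [hdist]
  -- now compute the sInf
  apply le_antisymm
  · -- sInf ≤ -‖p‖ : exhibit a point
    rcases eq_or_ne p 0 with hp0 | hp0
    · have h0mem : (0:ℝ) ∈ ((fun v => ⟪g, v⟫) '' {v | v ∈ K ∧ ‖v‖ ≤ 1}) :=
        ⟨0, ⟨h0, by simp⟩, by simp⟩
      have hb : BddBelow ((fun v => ⟪g, v⟫) '' {v | v ∈ K ∧ ‖v‖ ≤ 1}) := by
        refine ⟨-‖p‖, ?_⟩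
        rintro _ ⟨v, ⟨hvK, hv1⟩, rfl⟩
        simp [hp0] at *
        have := hudual v hvK
        simpa [hp0] using this
      calc sInf _ ≤ 0 := csInf_le hb h0mem
        _ = -‖p‖ := by simp [hp0]
    · have hpn : 0 < ‖p‖ := norm_pos_iff.mpr hp0
      have hmem : (-‖p‖ : ℝ) ∈ ((fun v => ⟪g, v⟫) '' {v | v ∈ K ∧ ‖v‖ ≤ 1}) := by
        refine ⟨‖p‖⁻¹ • p, ⟨hcone _ (by positivity) p hpK, ?_⟩, ?_⟩
        · rw [norm_smul]; simp [abs_of_pos (inv_pos.mpr hpn)]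
          rw [inv_mul_cancel₀ hpn.ne']
        · show ⟪g, ‖p‖⁻¹ • p⟫ = -‖p‖
          rw [real_inner_smul_right, hgp]
          field_simp
      apply csInf_le ?_ hmem
      refine ⟨-‖p‖, ?_⟩
      rintro _ ⟨v, ⟨hvK, hv1⟩, rfl⟩
      have hud := hudual v hvK
      have e : ⟪g + p, v⟫ = ⟪g, v⟫ + ⟪p, v⟫ := inner_add_left _ _ _
      have hcs : ⟪p, v⟫ ≤ ‖p‖ * ‖v‖ := real_inner_le_norm _ _
      have : ‖p‖ * ‖v‖ ≤ ‖p‖ * 1 := by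
        apply mul_le_mul_of_nonneg_left hv1 (norm_nonneg _)
      simp only [Function.const]
      rw [e] at hud
      linarith
  · -- -‖p‖ ≤ sInf : lower bound
    refine le_csInf ⟨_, ⟨0, ⟨h0, by simp⟩, rfl⟩⟩ ?_
    rintro _ ⟨v, ⟨hvK, hv1⟩, rfl⟩
    have hud := hudual v hvK
    have e : ⟪g + p, v⟫ = ⟪g, v⟫ + ⟪p, v⟫ := inner_add_left _ _ _
    have hcs : ⟪p, v⟫ ≤ ‖p‖ * ‖v‖ := real_inner_le_norm _ _
    have : ‖p‖ * ‖v‖ ≤ ‖p‖ * 1 := mul_le_mul_of_nonneg_left hv1 (norm_nonneg _)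
    rw [e] at hud
    linarith
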